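/- arXiv:1811.00361 — 2 statements merged into one kernel-verified Lean document; each statement's English description precedes it below -/
import Mathlib

section
/- For every integer p ≥ 2, ∑_{k=1}^{p-1} csc²(πk/p) = (p² − 1)/3. -/
open Real Finset

open Classical in
noncomputable def saw (x : ℝ) : ℝ := if ∃ n : ℤ, x = n then 0 else x - ⌊x⌋ - 1/2

noncomputable def dedekindSum (a b : ℕ) : ℝ :=
  ∑ k ∈ Finset.Ico 1 b, saw (k * a / b) * saw (k / b)

noncomputable def S (p q : ℕ) (r : ℤ) : ℝ :=
  ∑ k ∈ Finset.Ico 1 p,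
    Real.cos (π * k * r / p) / (Real.sin (π * k * q / p) * Real.sin (π * k / p))

open Complex

-- telescoping: (z-1) * ∑ j z^j
lemma aux_tel (z : ℂ) : ∀ n : ℕ, (z - 1) * ∑ j ∈ range n, (j:ℂ) * z^j
    = ((n:ℂ) - 1) * z^n - ∑ j ∈ range n, z^j + 1 := by
  intro n
  induction n with
  | zero => simp
  | succ n ih =>
    rw [sum_range_succ, sum_range_succ]
    push_cast
    ring_nf
    ring_nf at ih
    linear_combination ih

lemma aux_sum_id (n : ℕ) : ∑ i ∈ range n, (i:ℂ) = n*(n-1)/2 := by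
  induction n with
  | zero => simp
  | succ n ih => rw [sum_range_succ, ih]; push_cast; ring

lemma aux_sum_sq (n : ℕ) : ∑ i ∈ range n, (i:ℂ)^2 = n*(n-1)*(2*n-1)/6 := by
  induction n with
  | zero => simp
  | succ n ih => rw [sum_range_succ, ih]; push_cast; ring

lemma aux_geom (p : ℕ) (z : ℂ) (hzp : z ^ p = 1) (hz1 : z ≠ 1) :
    ∑ j ∈ range p, z^j = 0 := by
  rw [geom_sum_eq hz1, hzp]; simp

lemma aux_A (p : ℕ) (hp : 1 ≤ p) (z : ℂ) (hzp : z ^ p = 1) (hz1 : z ≠ 1) :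
    (z - 1) * ∑ j ∈ range p, (j:ℂ) * z^j = p := by
  rw [aux_tel, aux_geom p z hzp hz1, hzp]; ring

-- sin expressed via z = exp(2πik/p)
lemma aux_sin (p k : ℕ) (hk : 1 ≤ k) (hkp : k < p) :
    ((1 / Real.sin (Real.pi * k / p) : ℝ) : ℂ)^2
      = -4 * (Complex.exp (2*Real.pi*I/p))^k / ((Complex.exp (2*Real.pi*I/p))^k - 1)^2 := by
  have hp0 : 0 < p := by omega
  have hp0' : (p:ℝ) ≠ 0 := by positivity
  have hp0c : (p:ℂ) ≠ 0 := by exact_mod_cast Nat.cast_ne_zero.mpr hp0.ne'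
  have hθ1 : 0 < Real.pi * k / p := by
    have := Real.pi_pos
    have hk' : (0:ℝ) < k := by exact_mod_cast hk
    positivity
  have hθ2 : Real.pi * k / p < Real.pi := by
    have h1 : (k:ℝ)/p < 1 := (div_lt_one (by positivity)).mpr (by exact_mod_cast hkp)
    have := Real.pi_pos
    calc Real.pi * k / p = Real.pi * ((k:ℝ)/p) := by ring
    _ < Real.pi * 1 := by nlinarith
    _ = Real.pi := mul_one _
  have hsin : Real.sin (Real.pi * k / p) ≠ 0 :=
    ne_of_gt (Real.sin_pos_of_pos_of_lt_pi hθ1 hθ2)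
  have hsinc : (Real.sin (Real.pi * k / p) : ℂ) ≠ 0 := by exact_mod_cast hsin
  set w : ℂ := Complex.exp ((Real.pi * k / p : ℝ) * I) with hw
  have hw0 : w ≠ 0 := Complex.exp_ne_zero _
  have hzw : (Complex.exp (2*(Real.pi:ℂ)*I/p))^k = w^2 := by
    rw [← Complex.exp_nat_mul, sq, ← Complex.exp_add]
    congr 1
    push_cast
    field_simp
    ring
  have hz1 : (Complex.exp (2*(Real.pi:ℂ)*I/p))^k ≠ 1 := by
    have hζ : IsPrimitiveRoot (Complex.exp (2 * Real.pi * I / p)) p :=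
      Complex.isPrimitiveRoot_exp p hp0.ne'
    exact hζ.pow_ne_one_of_pos_of_lt (Nat.one_le_iff_ne_zero.mp hk) hkp
  rw [hzw] at hz1 ⊢
  have hz1' : w^2 - 1 ≠ 0 := sub_ne_zero.mpr hz1
  have hsinw : (Real.sin (Real.pi * k / p) : ℂ) = (w⁻¹ - w) * I / 2 := by
    rw [Complex.ofReal_sin, Complex.sin, ← Complex.exp_neg, neg_mul, hw]
  rw [hsinw] at hsinc
  rw [Complex.ofReal_div, Complex.ofReal_one, hsinw]
  have h4 : -4 * w^2 * (((w⁻¹ - w) * I / 2)^2) = (w^2 - 1)^2 := by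
    have hI : ((w⁻¹ - w) * I / 2)^2 = (w⁻¹ - w)^2 * I^2 / 4 := by ring
    rw [hI, Complex.I_sq]
    field_simp
    ring
  rw [div_pow, one_pow, div_eq_div_iff (pow_ne_zero 2 hsinc) (pow_ne_zero 2 hz1')]
  linear_combination -h4

lemma aux_orth (p : ℕ) (hp : 0 < p) (m : ℕ) (hm1 : 1 ≤ m) (hm2 : m < 2*p) :
    ∑ k ∈ range p, ((Complex.exp (2*Real.pi*I/p))^m)^k
      = if m = p then (p:ℂ) else 0 := by
  have hζ : IsPrimitiveRoot (Complex.exp (2*(Real.pi:ℂ)*I/p)) p :=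
    Complex.isPrimitiveRoot_exp p hp.ne'
  by_cases hmp : m = p
  · subst hmp
    rw [hζ.pow_eq_one]
    simp
  · rw [if_neg hmp]
    apply aux_geom
    · rw [← pow_mul, mul_comm m p, pow_mul, hζ.pow_eq_one, one_pow]
    · intro h
      rcases (hζ.pow_eq_one_iff_dvd m).mp h with ⟨c, hc⟩
      rcases c with _ | _ | c
      · simp at hc; omega
      · simp at hc; exact hmp hc
      · exfalso; nlinarith

theorem stmt9 (p : ℕ) (hp : 2 ≤ p) :
    ∑ k ∈ Finset.Ico 1 p, (1 / Real.sin (π * k / p)) ^ 2 = ((p : ℝ) ^ 2 - 1) / 3 := by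
  have hp0 : 0 < p := by omega
  have hpc : (p:ℂ) ≠ 0 := Nat.cast_ne_zero.mpr hp0.ne'
  set ζ : ℂ := Complex.exp (2*(Real.pi:ℂ)*I/p) with hζdef
  have hζ : IsPrimitiveRoot ζ p := Complex.isPrimitiveRoot_exp p hp0.ne'
  apply Complex.ofReal_injective
  push_cast
  have hterm : ∀ k ∈ Ico 1 p, ((1:ℂ) / Complex.sin ((π:ℂ) * k / p)) ^ 2
      = (-4/(p:ℂ)^2) * (ζ^k * (∑ j ∈ range p, (j:ℂ) * (ζ^k)^j)^2) := by
    intro k hk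
    rw [mem_Ico] at hk
    have hz1 : ζ^k ≠ 1 := hζ.pow_ne_one_of_pos_of_lt (Nat.one_le_iff_ne_zero.mp hk.1) hk.2
    have hzp : (ζ^k)^p = 1 := by
      rw [← pow_mul, mul_comm k p, pow_mul, hζ.pow_eq_one, one_pow]
    have hA := aux_A p (by omega) (ζ^k) hzp hz1
    have hd : ζ^k - 1 ≠ 0 := sub_ne_zero.mpr hz1
    have key : -4 * ζ^k / (ζ^k - 1)^2
        = -4/(p:ℂ)^2 * (ζ^k * (∑ j ∈ range p, (j:ℂ)*(ζ^k)^j)^2) := by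
      rw [div_mul_eq_mul_div, div_eq_div_iff (pow_ne_zero 2 hd) (pow_ne_zero 2 hpc)]
      linear_combination (4*ζ^k*((p:ℂ) + (ζ^k-1)*∑ j ∈ range p, (j:ℂ)*(ζ^k)^j)) * hA
    have hs : ((π:ℂ) * k / p) = ((π * k / p : ℝ) : ℂ) := by push_cast; ring
    rw [hs, ← Complex.ofReal_sin,
      show ((1:ℂ) / (Real.sin (π*k/p):ℂ))^2 = ((1 / Real.sin (π * k / p) : ℝ) : ℂ)^2 by
        push_cast; ring,
      aux_sin p k hk.1 hk.2, ← hζdef]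
    exact key
  rw [sum_congr rfl hterm, ← mul_sum]
  have hsplit : ∑ k ∈ Ico 1 p, ζ^k * (∑ j ∈ range p, (j:ℂ) * (ζ^k)^j)^2
      = ∑ k ∈ range p, ζ^k * (∑ j ∈ range p, (j:ℂ) * (ζ^k)^j)^2
        - (∑ j ∈ range p, (j:ℂ))^2 := by
    rw [Finset.sum_Ico_eq_sub _ hp0, Finset.sum_range_one]
    simp
  rw [hsplit]
  have hexp : ∀ k ∈ range p, ζ^k * (∑ j ∈ range p, (j:ℂ) * (ζ^k)^j)^2
      = ∑ i ∈ range p, ∑ j ∈ range p, ((i:ℂ)*(j:ℂ)) * (ζ^(i+j+1))^k := by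
    intro k _
    rw [sq, Finset.sum_mul_sum, Finset.mul_sum]
    refine sum_congr rfl fun i _ => ?_
    rw [Finset.mul_sum]
    refine sum_congr rfl fun j _ => ?_
    have hpow : (ζ^(i+j+1))^k = ζ^k * (ζ^k)^i * (ζ^k)^j := by
      rw [← pow_mul, ← pow_mul, ← pow_mul, ← pow_add, ← pow_add]
      congr 1
      ring
    rw [hpow]
    ring
  have hrange : ∑ k ∈ range p, ζ^k * (∑ j ∈ range p, (j:ℂ) * (ζ^k)^j)^2
      = (p:ℂ) * (((p:ℂ)-1)*((p:ℂ)*((p:ℂ)-1)/2) - (p:ℂ)*((p:ℂ)-1)*(2*(p:ℂ)-1)/6) := by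
    rw [sum_congr rfl hexp, Finset.sum_comm]
    have h1 : ∀ i ∈ range p,
        ∑ k ∈ range p, ∑ j ∈ range p, ((i:ℂ)*(j:ℂ)) * (ζ^(i+j+1))^k
          = (i:ℂ) * ((p:ℂ)-1-(i:ℂ)) * (p:ℂ) := by
      intro i hi
      rw [mem_range] at hi
      rw [Finset.sum_comm]
      have h2 : ∀ j ∈ range p,
          ∑ k ∈ range p, ((i:ℂ)*(j:ℂ)) * (ζ^(i+j+1))^k
            = if j = p-1-i then (i:ℂ)*(j:ℂ)*(p:ℂ) else 0 := by
        intro j hj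
        rw [mem_range] at hj
        rw [← Finset.mul_sum, aux_orth p hp0 (i+j+1) (by omega) (by omega)]
        by_cases h : i + j + 1 = p
        · rw [if_pos h, if_pos (by omega)]
        · rw [if_neg h, if_neg (by omega), mul_zero]
      rw [sum_congr rfl h2, Finset.sum_ite_eq' (range p) (p-1-i)
        (fun j => (i:ℂ)*(j:ℂ)*(p:ℂ)), if_pos (mem_range.mpr (by omega))]
      have : ((p-1-i : ℕ) : ℂ) = (p:ℂ)-1-(i:ℂ) := by
        rw [Nat.cast_sub (by omega), Nat.cast_sub (by omega)]
        push_cast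
        ring
      rw [this]
    rw [sum_congr rfl h1]
    have e : ∀ i ∈ range p, (i:ℂ)*((p:ℂ)-1-(i:ℂ))*(p:ℂ)
        = (p:ℂ)*(((p:ℂ)-1)*(i:ℂ) - (i:ℂ)^2) := fun i _ => by ring
    rw [sum_congr rfl e, ← Finset.mul_sum, Finset.sum_sub_distrib, ← Finset.mul_sum,
      aux_sum_id, aux_sum_sq]
  rw [hrange, aux_sum_id]
  field_simp
  ring
end

section
/- For positive integers p, m with m < p: ∑_{k=0}^{p-1} sin^{2m}(πk/p) = 2^{1−2m}·p·C(2m−1, m−1). -/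
open Real Finset

lemma sin_pow_expand (z : ℂ) (m : ℕ) :
    Complex.sin z ^ (2*m) = ∑ j ∈ Finset.range (2*m+1),
      ((-1:ℂ)^(m+j) / 4^m * (Nat.choose (2*m) j)) *
        Complex.exp (z*Complex.I) ^ (2*(m:ℤ) - 2*j) := by
  set a := Complex.exp (z*Complex.I) with ha
  have ha0 : a ≠ 0 := Complex.exp_ne_zero _
  have h1 : Complex.sin z = (a⁻¹ - a) * Complex.I / 2 := by
    rw [Complex.sin, ← Complex.exp_neg, ha]; ring_nf
  rw [h1]
  have h2 : ((a⁻¹ - a) * Complex.I / 2) ^ (2*m) = (a⁻¹ - a)^(2*m) * (-1)^m / 4^m := by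
    rw [div_pow, mul_pow, pow_mul, pow_mul, pow_mul, Complex.I_sq]
    norm_num
  rw [h2]
  have h3 : (a⁻¹ - a) = a⁻¹ * (1 + (-(a^2))) := by field_simp; ring
  rw [h3, mul_pow, add_pow, Finset.mul_sum, Finset.sum_mul, Finset.sum_div]
  refine Finset.sum_congr rfl fun j hj => ?_
  simp only [Finset.mem_range] at hj
  have hjle : j ≤ 2*m := by omega
  have he : a ^ (2*(m:ℤ) - 2*j) = a^(2*(2*m-j)) * (a^(2*m))⁻¹ := by
    rw [← zpow_natCast a (2*(2*m-j)), ← zpow_natCast a (2*m), ← zpow_neg, ← zpow_add₀ ha0]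
    congr 1
    push_cast [Nat.cast_sub hjle]
    ring
  have hsg : ((-1:ℂ))^(2*m-j) = (-1)^j := by
    rcases Nat.even_or_odd j with hj2 | hj2
    · have hev : Even (2*m - j) := by rcases hj2 with ⟨t, ht⟩; exact ⟨m - t, by omega⟩
      rw [hev.neg_one_pow, hj2.neg_one_pow]
    · have hod : Odd (2*m - j) := by rcases hj2 with ⟨t, ht⟩; exact ⟨m - t - 1, by omega⟩
      rw [hod.neg_one_pow, hj2.neg_one_pow]
  rw [he, one_pow, inv_pow, neg_pow, hsg, ← pow_mul, pow_add]
  ring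

theorem stmt17 (p m : ℕ) (hp : 0 < p) (hm : 0 < m) (hmp : m < p) :
    ∑ k ∈ Finset.range p, Real.sin (π * k / p) ^ (2 * m) =
      (2 : ℝ) ^ (1 - 2 * (m : ℤ)) * p * (Nat.choose (2 * m - 1) (m - 1)) := by
  have hp0 : (p : ℂ) ≠ 0 := Nat.cast_ne_zero.mpr hp.ne'
  have hπ : (π : ℂ) ≠ 0 := Complex.ofReal_ne_zero.mpr Real.pi_ne_zero
  apply Complex.ofReal_injective
  push_cast [Complex.ofReal_sin]
  calc ∑ k ∈ Finset.range p, Complex.sin (π * k / p) ^ (2*m)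
      = ∑ k ∈ Finset.range p, ∑ j ∈ Finset.range (2*m+1),
          ((-1:ℂ)^(m+j) / 4^m * (Nat.choose (2*m) j)) *
            Complex.exp (((π : ℂ) * k / p)*Complex.I) ^ (2*(m:ℤ) - 2*j) := by
        exact Finset.sum_congr rfl fun k _ => sin_pow_expand _ m
    _ = ∑ j ∈ Finset.range (2*m+1), ((-1:ℂ)^(m+j) / 4^m * (Nat.choose (2*m) j)) *
          ∑ k ∈ Finset.range p, Complex.exp (((π : ℂ) * k / p)*Complex.I) ^ (2*(m:ℤ) - 2*j) := by
        rw [Finset.sum_comm]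
        exact Finset.sum_congr rfl fun j _ => by rw [Finset.mul_sum]
    _ = ∑ j ∈ Finset.range (2*m+1), ((-1:ℂ)^(m+j) / 4^m * (Nat.choose (2*m) j)) *
          (if j = m then (p:ℂ) else 0) := by
        refine Finset.sum_congr rfl fun j hj => ?_
        simp only [Finset.mem_range] at hj
        congr 1
        set e : ℤ := 2*(m:ℤ) - 2*j with hed
        have hkey : ∀ k : ℕ, Complex.exp (((π : ℂ) * k / p)*Complex.I) ^ e
            = Complex.exp (((e : ℂ) * π / p) * Complex.I) ^ k := by
          intro k
          rw [← Complex.exp_int_mul, ← Complex.exp_nat_mul]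
          congr 1
          field_simp
        simp only [hkey]
        by_cases hjm : j = m
        · subst hjm
          simp [hed]
        · rw [if_neg hjm]
          have hw1 : Complex.exp (((e : ℂ) * π / p) * Complex.I) ≠ 1 := by
            intro h1
            rw [Complex.exp_eq_one_iff] at h1
            obtain ⟨n, hn⟩ := h1
            have : (e : ℂ) = 2 * n * p := by
              field_simp at hn
              have h2 : ((e:ℂ) * π) * Complex.I = (2 * n * p * π) * Complex.I := by
                rw [hn]; ring
              have := mul_right_cancel₀ Complex.I_ne_zero h2
              exact mul_right_cancel₀ hπ this
            have he' : e = 2 * n * p := by exact_mod_cast this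
            have he0 : e ≠ 0 := by omega
            have hlt : e.natAbs < 2*p := by omega
            have hn : n ≠ 0 := fun h => he0 (by simp [he', h])
            have h2p : 2*p ≤ e.natAbs := by
              rw [he', Int.natAbs_mul, Int.natAbs_mul]
              simp only [Int.natAbs_natCast]
              have h1n : 1 ≤ n.natAbs := Int.natAbs_pos.mpr hn
              calc 2*p = 2*1*p := by ring
                _ ≤ 2*n.natAbs*p := by
                    exact Nat.mul_le_mul_right p (Nat.mul_le_mul_left 2 h1n)
            omega
          rw [geom_sum_eq hw1]
          have hwp : Complex.exp (((e : ℂ) * π / p) * Complex.I) ^ p = 1 := by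
            rw [← Complex.exp_nat_mul]
            have : (p:ℂ) * (((e : ℂ) * π / p) * Complex.I) = (((m : ℤ) - (j : ℤ) : ℤ) : ℂ) * (2 * π * Complex.I) := by
              field_simp
              push_cast [hed]
              ring
            rw [this, Complex.exp_int_mul_two_pi_mul_I]
          rw [hwp, sub_self, zero_div]
    _ = (2 : ℂ) ^ (1 - 2 * (m : ℤ)) * p * (Nat.choose (2 * m - 1) (m - 1)) := by
        rw [Finset.sum_eq_single m]
        · have hch : (Nat.choose (2*m) m) = 2 * Nat.choose (2*m-1) (m-1) := by
            have h := Nat.add_one_mul_choose_eq (2*m-1) (m-1)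
            rw [show 2*m-1+1 = 2*m by omega, show m-1+1 = m by omega] at h
            have : (2 * Nat.choose (2*m-1) (m-1)) * m = Nat.choose (2*m) m * m := by
              rw [← h]; ring
            exact (Nat.eq_of_mul_eq_mul_right hm this).symm
          have h4 : (2:ℂ) ^ (1 - 2 * (m : ℤ)) = 2 / 4^m := by
            rw [zpow_sub₀ two_ne_zero, zpow_one]
            congr 1
            rw [show (2*(m:ℤ)) = ((2*m : ℕ) : ℤ) by push_cast; ring, zpow_natCast, pow_mul]
            norm_num
          rw [if_pos rfl, hch, h4]
          push_cast
          have h40 : (4:ℂ)^m ≠ 0 := pow_ne_zero _ (by norm_num)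
          rw [show m + m = 2*m by ring, pow_mul]
          field_simp
          ring
        · intro j hj hjm
          rw [if_neg hjm, mul_zero]
        · intro h
          exact absurd (Finset.mem_range.mpr (by omega)) h
end
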